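/- Let 0 ≤ h ≤ α and β ∈ 𝓑(α). Define Φ_h(β)(u,v) = max over 0 ≤ z ≤ u of: β(u−z, v−z) if 0 ≤ z ≤ v, and h(z−v) + β(u−z, 0) if v ≤ z ≤ u. Then Φ_h(β) ∈ 𝓑̄_h(α): it belongs to 𝓑(α), satisfies Φ_h(β)(u+z, v+z) ≥ Φ_h(β)(u,v) for all (u,v) ∈ Δ and z ≥ 0, and satisfies Φ_h(β)(u,0) − Φ_h(β)(v,0) ≥ h(u−v) for all 0 ≤ v ≤ u. -/
import Mathlib


open Set Filter

/-- The space `𝓑`: functions on `Δ = {(u,v) : 0 ≤ v ≤ u}` with `ψ(u,u)=0`, nonnegative,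
subadditive, increasing in the first variable and decreasing in the second. -/
def MemB (ψ : ℝ → ℝ → ℝ) : Prop :=
  (∀ u, 0 ≤ u → ψ u u = 0) ∧
  (∀ u v, 0 ≤ v → v ≤ u → 0 ≤ ψ u v) ∧
  (∀ u w v, 0 ≤ v → v ≤ w → w ≤ u → ψ u v ≤ ψ u w + ψ w v) ∧
  (∀ u w v, 0 ≤ v → v ≤ w → w ≤ u → ψ w v ≤ ψ u v) ∧
  (∀ u w v, 0 ≤ v → v ≤ w → w ≤ u → ψ u w ≤ ψ u v)

/-- The space `𝓑(α)`: members of `𝓑` which are `α`-Lipschitz for the `L¹` metric on `Δ`. -/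
def MemBLip (α : ℝ) (ψ : ℝ → ℝ → ℝ) : Prop :=
  MemB ψ ∧ ∀ u v u' v', 0 ≤ v → v ≤ u → 0 ≤ v' → v' ≤ u' →
    |ψ u v - ψ u' v'| ≤ α * (|u - u'| + |v - v'|)

/-- The space `𝓑̄_h(α)`: members of `𝓑(α)` which are increasing along diagonals and whose
restriction to the bottom edge grows at least at rate `h`. -/
def MemBbar (h α : ℝ) (ψ : ℝ → ℝ → ℝ) : Prop :=
  MemBLip α ψ ∧
  (∀ u v z, 0 ≤ v → v ≤ u → 0 ≤ z → ψ u v ≤ ψ (u + z) (v + z)) ∧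
  (∀ u v, 0 ≤ v → v ≤ u → h * (u - v) ≤ ψ u 0 - ψ v 0)

/-- The space `𝓖`: decreasing nonnegative functions on `[0,1]` vanishing at `1` with
`γ(λθ) ≤ γ(θ) + θγ(λ)`. -/
def MemG (γ : ℝ → ℝ) : Prop :=
  γ 1 = 0 ∧ (∀ θ, 0 ≤ θ → θ ≤ 1 → 0 ≤ γ θ) ∧
  (∀ a b, 0 ≤ a → a ≤ b → b ≤ 1 → γ b ≤ γ a) ∧
  (∀ l t, 0 ≤ l → l ≤ 1 → 0 ≤ t → t ≤ 1 → γ (l * t) ≤ γ t + t * γ l)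

/-- The space `𝓖(α)`: `α`-Lipschitz members of `𝓖`. -/
def MemGLip (α : ℝ) (γ : ℝ → ℝ) : Prop :=
  MemG γ ∧ ∀ a b, 0 ≤ a → a ≤ 1 → 0 ≤ b → b ≤ 1 → |γ a - γ b| ≤ α * |a - b|

/-- The space `𝓖̄_h(α)`: members of `𝓖(α)` with `γ(0) ≥ h` and `θ ↦ γ(θ)/(1-θ)` increasing. -/
def MemGbar (h α : ℝ) (γ : ℝ → ℝ) : Prop :=
  MemGLip α γ ∧ h ≤ γ 0 ∧
  ∀ a b, 0 ≤ a → a ≤ b → b < 1 → γ a / (1 - a) ≤ γ b / (1 - b)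

/-- The normalized limit `Γ(ψ)(θ) = limsup_{u→∞} ψ(u,θu)/u`. -/
noncomputable def Gam (ψ : ℝ → ℝ → ℝ) (θ : ℝ) : ℝ :=
  Filter.limsup (fun u => ψ u (θ * u) / u) Filter.atTop

/-- The projection `Φ_h(β)(u,v) = max_{0 ≤ z ≤ u}` of `β(u-z,v-z)` for `z ≤ v` and
`h(z-v) + β(u-z,0)` for `v ≤ z ≤ u`. -/
noncomputable def Phi (h : ℝ) (β : ℝ → ℝ → ℝ) (u v : ℝ) : ℝ :=
  sSup ((fun z => if z ≤ v then β (u - z) (v - z) else h * (z - v) + β (u - z) 0) ''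
    Set.Icc 0 u)

/-- The projection `Ω_h(γ)(θ) = (1-θ)·max{h, max_{0 ≤ λ ≤ θ} γ(λ)/(1-λ)}`. -/
noncomputable def Om (h : ℝ) (γ : ℝ → ℝ) (θ : ℝ) : ℝ :=
  (1 - θ) * max h (sSup ((fun l => γ l / (1 - l)) '' Set.Icc 0 θ))

/-- The space `𝓒(α)`: increasing `α`-Lipschitz functions `g : [0,∞) → [0,∞)` with `g(0)=0`. -/
def MemC (α : ℝ) (g : ℝ → ℝ) : Prop :=
  g 0 = 0 ∧ (∀ u, 0 ≤ u → 0 ≤ g u) ∧ (∀ a b, 0 ≤ a → a ≤ b → g a ≤ g b) ∧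
  (∀ a b, 0 ≤ a → 0 ≤ b → |g a - g b| ≤ α * |a - b|)


namespace PhiAux

/-- The inner function of the sup defining `Phi`. -/
noncomputable def F (h : ℝ) (β : ℝ → ℝ → ℝ) (u v z : ℝ) : ℝ :=
  if z ≤ v then β (u - z) (v - z) else h * (z - v) + β (u - z) 0

lemma Phi_eq (h : ℝ) (β : ℝ → ℝ → ℝ) (u v : ℝ) :
    Phi h β u v = sSup (F h β u v '' Set.Icc 0 u) := rfl

section lemmas

variable {h α : ℝ} {β : ℝ → ℝ → ℝ}
variable (hh : 0 ≤ h) (hhα : h ≤ α) (hβ : MemBLip α β)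

lemma hbeta_ab (hβ : MemBLip α β) : ∀ a b, 0 ≤ b → b ≤ a → β a b ≤ α * (a - b) := by
  intro a b hb hba
  have h1 := hβ.2 a b b b hb hba hb le_rfl
  have h2 : β b b = 0 := hβ.1.1 b hb
  rw [h2, sub_zero, sub_self, abs_zero, add_zero, abs_of_nonneg (by linarith : (0:ℝ) ≤ a - b)] at h1
  calc β a b ≤ |β a b| := le_abs_self _
    _ ≤ α * (a - b) := h1

/-- One-sided Lipschitz bound for β. -/
lemma hlip' (hβ : MemBLip α β) : ∀ u v u' v', 0 ≤ v → v ≤ u → 0 ≤ v' → v' ≤ u' →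
    β u v ≤ β u' v' + α * (|u - u'| + |v - v'|) := by
  intro u v u' v' hv hvu hv' hv'u'
  have := (abs_le.1 (hβ.2 u v u' v' hv hvu hv' hv'u')).2
  linarith

lemma F_bound (hh : 0 ≤ h) (hhα : h ≤ α) (hβ : MemBLip α β) :
    ∀ u v z, 0 ≤ v → v ≤ u → 0 ≤ z → z ≤ u → F h β u v z ≤ α * (u - v) := by
  intro u v z hv hvu hz hzu
  unfold F
  by_cases hzv : z ≤ v
  · rw [if_pos hzv]
    have h1 := hbeta_ab hβ (u - z) (v - z) (by linarith) (by linarith)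
    have h2 : α * (u - z - (v - z)) = α * (u - v) := by ring
    linarith
  · rw [if_neg hzv]
    push_neg at hzv
    have h1 := hbeta_ab hβ (u - z) 0 le_rfl (by linarith)
    have h2 : h * (z - v) ≤ α * (z - v) :=
      mul_le_mul_of_nonneg_right hhα (by linarith)
    have h3 : α * (u - z - 0) + α * (z - v) = α * (u - v) := by ring
    linarith

lemma bddF (hh : 0 ≤ h) (hhα : h ≤ α) (hβ : MemBLip α β) {u v : ℝ} (hv : 0 ≤ v) (hvu : v ≤ u) :
    BddAbove (F h β u v '' Set.Icc 0 u) := by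
  refine ⟨α * (u - v), ?_⟩
  rintro x ⟨z, hz, rfl⟩
  exact F_bound hh hhα hβ u v z hv hvu hz.1 hz.2

lemma le_Phi (hh : 0 ≤ h) (hhα : h ≤ α) (hβ : MemBLip α β) {u v z : ℝ}
    (hv : 0 ≤ v) (hvu : v ≤ u) (hz : 0 ≤ z) (hzu : z ≤ u) :
    F h β u v z ≤ Phi h β u v := by
  rw [Phi_eq]
  exact le_csSup (bddF hh hhα hβ hv hvu) (Set.mem_image_of_mem _ ⟨hz, hzu⟩)

lemma Phi_le {u v M : ℝ} (hv : 0 ≤ v) (hvu : v ≤ u)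
    (hM : ∀ z, 0 ≤ z → z ≤ u → F h β u v z ≤ M) : Phi h β u v ≤ M := by
  rw [Phi_eq]
  apply csSup_le ⟨F h β u v 0, Set.mem_image_of_mem _ (Set.mem_Icc.2 ⟨le_rfl, hv.trans hvu⟩)⟩
  rintro x ⟨z, hz, rfl⟩
  exact hM z hz.1 hz.2

lemma beta_le_Phi (hh : 0 ≤ h) (hhα : h ≤ α) (hβ : MemBLip α β) {u v : ℝ}
    (hv : 0 ≤ v) (hvu : v ≤ u) : β u v ≤ Phi h β u v := by
  have h1 := le_Phi hh hhα hβ hv hvu le_rfl (hv.trans hvu)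
  unfold F at h1
  rw [if_pos hv, sub_zero, sub_zero] at h1
  exact h1

lemma F_diag (hh : 0 ≤ h) (hβ : MemBLip α β) : ∀ a b, 0 ≤ b → b ≤ a →
    h * (a - b) ≤ F h β a b a := by
  intro a b hb hba
  unfold F
  by_cases hab : a ≤ b
  · have : a = b := le_antisymm hab hba
    subst this
    rw [if_pos le_rfl, sub_self]
    rw [hβ.1.1 0 le_rfl]
    simp
  · rw [if_neg hab, sub_self, hβ.1.1 0 le_rfl]
    linarith

/-- Lipschitz in the first variable (one-sided). -/
lemma lipU (hh : 0 ≤ h) (hhα : h ≤ α) (hβ : MemBLip α β) :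
    ∀ u u' v, 0 ≤ v → v ≤ u' → u' ≤ u → Phi h β u v ≤ Phi h β u' v + α * (u - u') := by
  intro u u' v hv hvu' hu'u
  apply Phi_le hv (hvu'.trans hu'u)
  intro z hz0 hzu
  by_cases hzu' : z ≤ u'
  · have hle : F h β u v z ≤ F h β u' v z + α * (u - u') := by
      unfold F
      by_cases hzv : z ≤ v
      · rw [if_pos hzv, if_pos hzv]
        have := hlip' hβ (u - z) (v - z) (u' - z) (v - z)
          (by linarith) (by linarith) (by linarith) (by linarith)
        have e1 : |u - z - (u' - z)| = u - u' := by
          rw [show u - z - (u' - z) = u - u' by ring, abs_of_nonneg (by linarith)]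
        have e2 : |v - z - (v - z)| = 0 := by simp
        rw [e1, e2, add_zero] at this
        linarith
      · rw [if_neg hzv, if_neg hzv]
        have := hlip' hβ (u - z) 0 (u' - z) 0 le_rfl (by linarith) le_rfl (by linarith)
        have e1 : |u - z - (u' - z)| = u - u' := by
          rw [show u - z - (u' - z) = u - u' by ring, abs_of_nonneg (by linarith)]
        rw [e1, sub_self, abs_zero, add_zero] at this
        linarith
    have := le_Phi hh hhα hβ hv hvu' hz0 hzu'
    linarith
  · push_neg at hzu'
    have hzv : ¬ z ≤ v := by push_neg; linarith
    have e1 : F h β u v z = h * (z - v) + β (u - z) 0 := by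
      unfold F; rw [if_neg hzv]
    have h1 := F_diag hh hβ u' v hv hvu'
    have h2 := hbeta_ab hβ (u - z) 0 le_rfl (by linarith)
    have h3 : h * (z - u') ≤ α * (z - u') :=
      mul_le_mul_of_nonneg_right hhα (by linarith)
    have h4 := le_Phi hh hhα hβ hv hvu' (hv.trans hvu') le_rfl
    have h5 : h * (z - v) = h * (u' - v) + h * (z - u') := by ring
    have h6 : α * (z - u') + α * (u - z - 0) = α * (u - u') := by ring
    linarith

/-- Lipschitz in the second variable (one-sided). -/
lemma lipV (hh : 0 ≤ h) (hhα : h ≤ α) (hβ : MemBLip α β) :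
    ∀ u v v', 0 ≤ v' → v' ≤ v → v ≤ u → Phi h β u v' ≤ Phi h β u v + α * (v - v') := by
  intro u v v' hv' hv'v hvu
  apply Phi_le hv' (hv'v.trans hvu)
  intro z hz0 hzu
  by_cases hzv' : z ≤ v'
  · have hle : F h β u v' z ≤ F h β u v z + α * (v - v') := by
      unfold F
      rw [if_pos hzv', if_pos (hzv'.trans hv'v)]
      have := hlip' hβ (u - z) (v' - z) (u - z) (v - z)
        (by linarith) (by linarith) (by linarith) (by linarith)
      have e1 : |v' - z - (v - z)| = v - v' := by
        rw [show v' - z - (v - z) = -(v - v') by ring, abs_neg, abs_of_nonneg (by linarith)]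
      rw [sub_self, abs_zero, zero_add, e1] at this
      linarith
    have := le_Phi hh hhα hβ (hv'.trans hv'v) hvu hz0 hzu
    linarith
  · by_cases hzv : z ≤ v
    · have hle : F h β u v' z ≤ F h β u v z + α * (v - v') := by
        unfold F
        rw [if_neg hzv', if_pos hzv]
        have h1 := hlip' hβ (u - z) 0 (u - z) (v - z)
          le_rfl (by linarith) (by linarith) (by linarith)
        have e1 : |0 - (v - z)| = v - z := by
          rw [zero_sub, abs_neg, abs_of_nonneg (by linarith)]
        rw [sub_self, abs_zero, zero_add, e1] at h1
        push_neg at hzv'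
        have h2 : h * (z - v') ≤ α * (z - v') :=
          mul_le_mul_of_nonneg_right hhα (by linarith)
        have h3 : α * (v - z) + α * (z - v') = α * (v - v') := by ring
        linarith
      have := le_Phi hh hhα hβ (hv'.trans hv'v) hvu hz0 hzu
      linarith
    · have hle : F h β u v' z ≤ F h β u v z + α * (v - v') := by
        unfold F
        rw [if_neg hzv', if_neg hzv]
        have h2 : h * (v - v') ≤ α * (v - v') :=
          mul_le_mul_of_nonneg_right hhα (by linarith)
        have h5 : h * (z - v') = h * (z - v) + h * (v - v') := by ring
        linarith
      have := le_Phi hh hhα hβ (hv'.trans hv'v) hvu hz0 hzu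
      linarith

/-- Monotone in the first variable. -/
lemma PhiMono (hh : 0 ≤ h) (hhα : h ≤ α) (hβ : MemBLip α β) :
    ∀ u w v, 0 ≤ v → v ≤ w → w ≤ u → Phi h β w v ≤ Phi h β u v := by
  intro u w v hv hvw hwu
  apply Phi_le hv hvw
  intro z hz0 hzw
  have hle : F h β w v z ≤ F h β u v z := by
    unfold F
    by_cases hzv : z ≤ v
    · rw [if_pos hzv, if_pos hzv]
      exact hβ.1.2.2.2.1 (u - z) (w - z) (v - z) (by linarith) (by linarith) (by linarith)
    · rw [if_neg hzv, if_neg hzv]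
      have := hβ.1.2.2.2.1 (u - z) (w - z) 0 le_rfl (by linarith) (by linarith)
      linarith
  have := le_Phi hh hhα hβ hv (hvw.trans hwu) hz0 (hzw.trans hwu)
  linarith

/-- Antitone in the second variable. -/
lemma PhiAnti (hh : 0 ≤ h) (hhα : h ≤ α) (hβ : MemBLip α β) :
    ∀ u w v, 0 ≤ v → v ≤ w → w ≤ u → Phi h β u w ≤ Phi h β u v := by
  intro u w v hv hvw hwu
  apply Phi_le (hv.trans hvw) hwu
  intro z hz0 hzu
  have hle : F h β u w z ≤ F h β u v z := by
    unfold F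
    by_cases hzv : z ≤ v
    · rw [if_pos hzv, if_pos (hzv.trans hvw)]
      exact hβ.1.2.2.2.2 (u - z) (w - z) (v - z) (by linarith) (by linarith) (by linarith)
    · rw [if_neg hzv]
      push_neg at hzv
      by_cases hzw : z ≤ w
      · rw [if_pos hzw]
        have := hβ.1.2.2.2.2 (u - z) (w - z) 0 le_rfl (by linarith) (by linarith)
        have h2 : 0 ≤ h * (z - v) := mul_nonneg hh (by linarith)
        linarith
      · rw [if_neg hzw]
        have h2 : h * (z - w) ≤ h * (z - v) :=
          mul_le_mul_of_nonneg_left (by linarith) hh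
        linarith
  have := le_Phi hh hhα hβ hv (hvw.trans hwu) hz0 hzu
  linarith

/-- One-sided full Lipschitz bound for `Phi`. -/
lemma oneside (hh : 0 ≤ h) (hhα : h ≤ α) (hβ : MemBLip α β) :
    ∀ u v u' v', 0 ≤ v → v ≤ u → 0 ≤ v' → v' ≤ u' →
    Phi h β u v - Phi h β u' v' ≤ α * (|u - u'| + |v - v'|) := by
  intro u v u' v' hv hvu hv' hv'u'
  have hα : 0 ≤ α := hh.trans hhα
  set m := min v v' with hm
  have hm0 : 0 ≤ m := le_min hv hv'
  have hmv : m ≤ v := min_le_left _ _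
  have hmv' : m ≤ v' := min_le_right _ _
  have step1 : Phi h β u v ≤ Phi h β u m := PhiAnti hh hhα hβ u v m hm0 hmv hvu
  have step2 : Phi h β u m ≤ Phi h β u' m + α * |u - u'| := by
    rcases le_total u u' with hle | hle
    · have := PhiMono hh hhα hβ u' u m hm0 (hmv.trans hvu) hle
      have h2 : 0 ≤ α * |u - u'| := mul_nonneg hα (abs_nonneg _)
      linarith
    · have := lipU hh hhα hβ u u' m hm0 (hmv'.trans hv'u') hle
      rw [abs_of_nonneg (by linarith : (0:ℝ) ≤ u - u')]
      linarith
  have step3 : Phi h β u' m ≤ Phi h β u' v' + α * |v - v'| := by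
    have := lipV hh hhα hβ u' v' m hm0 hmv' hv'u'
    have h2 : v' - m ≤ |v - v'| := by
      rcases le_total v v' with hle | hle
      · rw [hm, min_eq_left hle, abs_of_nonpos (by linarith)]
        linarith
      · rw [hm, min_eq_right hle]
        simp [abs_nonneg]
    have h3 : α * (v' - m) ≤ α * |v - v'| := mul_le_mul_of_nonneg_left h2 hα
    linarith
  linarith

end lemmas

end PhiAux

/-- For `0 ≤ h ≤ α` and `β ∈ 𝓑(α)`, the projection `Φ_h(β)` belongs to `𝓑̄_h(α)`. -/
theorem Phi_mem_Bbar (h α : ℝ) (hh : 0 ≤ h) (hhα : h ≤ α)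
    (β : ℝ → ℝ → ℝ) (hβ : MemBLip α β) :
    MemBbar h α (Phi h β) := by
  obtain ⟨⟨hd0, hnn, hsub, hmon, hant⟩, hlip⟩ := hβ
  have hβ : MemBLip α β := ⟨⟨hd0, hnn, hsub, hmon, hant⟩, hlip⟩
  have hα : 0 ≤ α := hh.trans hhα
  refine ⟨⟨⟨?_, ?_, ?_, ?_, ?_⟩, ?_⟩, ?_, ?_⟩
  · -- Phi u u = 0
    intro u hu
    apply le_antisymm
    · apply PhiAux.Phi_le hu le_rfl
      intro z hz0 hzu
      unfold PhiAux.F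
      rw [if_pos hzu, hd0 (u - z) (by linarith)]
    · have h1 := PhiAux.le_Phi hh hhα hβ hu le_rfl le_rfl hu (z := 0) (v := u)
      unfold PhiAux.F at h1
      rw [if_pos hu, sub_zero, hd0 u hu] at h1
      exact h1
  · -- nonneg
    intro u v hv hvu
    exact le_trans (hnn u v hv hvu) (PhiAux.beta_le_Phi hh hhα hβ hv hvu)
  · -- subadditive
    intro u w v hv hvw hwu
    apply PhiAux.Phi_le hv (hvw.trans hwu)
    intro z hz0 hzu
    by_cases hzv : z ≤ v
    · have e1 : PhiAux.F h β u v z = β (u - z) (v - z) := by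
        unfold PhiAux.F; rw [if_pos hzv]
      have e2 : PhiAux.F h β u w z = β (u - z) (w - z) := by
        unfold PhiAux.F; rw [if_pos (hzv.trans hvw)]
      have e3 : PhiAux.F h β w v z = β (w - z) (v - z) := by
        unfold PhiAux.F; rw [if_pos hzv]
      have h1 := hsub (u - z) (w - z) (v - z) (by linarith) (by linarith) (by linarith)
      have h2 := PhiAux.le_Phi hh hhα hβ (hv.trans hvw) hwu hz0 hzu
      have h3 := PhiAux.le_Phi hh hhα hβ hv hvw hz0 (hzv.trans hvw)
      rw [e2] at h2; rw [e3] at h3; rw [e1]; linarith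
    · by_cases hzw : z ≤ w
      · have e1 : PhiAux.F h β u v z = h * (z - v) + β (u - z) 0 := by
          unfold PhiAux.F; rw [if_neg hzv]
        have e2 : PhiAux.F h β u w z = β (u - z) (w - z) := by
          unfold PhiAux.F; rw [if_pos hzw]
        have e3 : PhiAux.F h β w v z = h * (z - v) + β (w - z) 0 := by
          unfold PhiAux.F; rw [if_neg hzv]
        have h1 := hsub (u - z) (w - z) 0 le_rfl (by linarith) (by linarith)
        have h2 := PhiAux.le_Phi hh hhα hβ (hv.trans hvw) hwu hz0 hzu
        have h3 := PhiAux.le_Phi hh hhα hβ hv hvw hz0 hzw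
        rw [e2] at h2; rw [e3] at h3; rw [e1]; linarith
      · push_neg at hzw
        have e1 : PhiAux.F h β u v z = h * (z - v) + β (u - z) 0 := by
          unfold PhiAux.F; rw [if_neg hzv]
        have e2 : PhiAux.F h β u w z = h * (z - w) + β (u - z) 0 := by
          unfold PhiAux.F; rw [if_neg (by push_neg; exact hzw : ¬ z ≤ w)]
        have h1 := PhiAux.F_diag hh hβ w v hv hvw
        have h2 := PhiAux.le_Phi hh hhα hβ (hv.trans hvw) hwu hz0 hzu
        have h3 := PhiAux.le_Phi hh hhα hβ hv hvw (hv.trans hvw) le_rfl (z := w)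
        have h4 : h * (z - v) = h * (z - w) + h * (w - v) := by ring
        rw [e2] at h2; rw [e1]; linarith
  · -- monotone in first variable
    exact PhiAux.PhiMono hh hhα hβ
  · -- antitone in second variable
    exact PhiAux.PhiAnti hh hhα hβ
  · -- Lipschitz
    intro u v u' v' hv hvu hv' hv'u'
    rw [abs_sub_le_iff]
    constructor
    · linarith [PhiAux.oneside hh hhα hβ u v u' v' hv hvu hv' hv'u']
    · have := PhiAux.oneside hh hhα hβ u' v' u v hv' hv'u' hv hvu
      rw [abs_sub_comm u' u, abs_sub_comm v' v] at this
      linarith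
  · -- increasing along diagonals
    intro u v w hv hvu hw
    apply PhiAux.Phi_le hv hvu
    intro z hz0 hzu
    have e : PhiAux.F h β u v z = PhiAux.F h β (u + w) (v + w) (z + w) := by
      unfold PhiAux.F
      by_cases hzv : z ≤ v
      · rw [if_pos hzv, if_pos (by linarith : z + w ≤ v + w)]
        rw [show u + w - (z + w) = u - z by ring, show v + w - (z + w) = v - z by ring]
      · rw [if_neg hzv, if_neg (by push_neg at hzv ⊢; linarith : ¬ z + w ≤ v + w)]
        rw [show u + w - (z + w) = u - z by ring, show z + w - (v + w) = z - v by ring]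
    rw [e]
    exact PhiAux.le_Phi hh hhα hβ (by linarith) (by linarith) (by linarith) (by linarith)
  · -- growth on the bottom edge
    intro u v hv hvu
    have key : Phi h β v 0 ≤ Phi h β u 0 - h * (u - v) := by
      apply PhiAux.Phi_le le_rfl hv
      intro z hz0 hzv
      rw [le_sub_iff_add_le]
      have h2 := PhiAux.le_Phi hh hhα hβ (le_refl 0) (hv.trans hvu)
        (by linarith : (0:ℝ) ≤ z + (u - v)) (by linarith : z + (u - v) ≤ u)
      have h1 : PhiAux.F h β v 0 z + h * (u - v) ≤ PhiAux.F h β u 0 (z + (u - v)) := by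
        unfold PhiAux.F
        by_cases hz : z ≤ 0
        · have hz0' : z = 0 := le_antisymm hz hz0
          subst hz0'
          by_cases hd : 0 + (u - v) ≤ 0
          · have huv : u = v := le_antisymm (by linarith) hvu
            subst huv
            rw [if_pos le_rfl, if_pos hd]
            simp
          · rw [if_pos le_rfl, if_neg hd]
            rw [show u - (0 + (u - v)) = v - 0 by ring, show (0:ℝ) + (u - v) - 0 = u - v by ring,
              show (0:ℝ) - 0 = 0 by ring]
            linarith
        · push_neg at hz
          have hd : ¬ z + (u - v) ≤ 0 := by push_neg; linarith
          rw [if_neg (by push_neg; exact hz : ¬ z ≤ 0), if_neg hd]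
          rw [show u - (z + (u - v)) = v - z by ring, show z + (u - v) - 0 = z + (u - v) by ring,
            show z - 0 = z by ring]
          have : h * (z + (u - v)) = h * z + h * (u - v) := by ring
          linarith
      linarith
    linarith
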